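/- For α ∈ (0,1), the function s ↦ Γ(1 + is)/Γ(1 + iαs) (where Γ is the complex Gamma function and i the imaginary unit) is integrable over ℝ; moreover |Γ(1+is)/Γ(1+iαs)| = O(|s|^{1/2 - 1/(2α)} · e^{-π(1-α)|s|/2})-type decay, in particular it tends to 0 faster than any polynomial as |s| → ∞. -/

import Mathlib

open Complex MeasureTheory Filter Real Set

lemma abs_gamma_sq' (t : ℝ) (ht : t ≠ 0) :
    ‖Complex.Gamma (1 + Complex.I * t)‖^2 = Real.pi * t / Real.sinh (Real.pi * t) := by
  have hz : (Complex.I * t) ≠ 0 := by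
    simp [Complex.ext_iff, ht]
  have h1 : Complex.Gamma (1 + Complex.I * t) = (Complex.I * t) * Complex.Gamma (Complex.I * t) := by
    rw [add_comm]; exact Complex.Gamma_add_one _ hz
  have hconj : (starRingEnd ℂ) (1 + Complex.I * t) = 1 - Complex.I * t := by
    simp [Complex.ext_iff]
  have h2 : (‖Complex.Gamma (1 + Complex.I * t)‖^2 : ℂ)
      = Complex.Gamma (1 + Complex.I * t) * Complex.Gamma (1 - Complex.I * t) := by
    rw [← hconj, Complex.Gamma_conj, Complex.mul_conj]
    norm_cast
    exact Complex.sq_norm _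
  have h3 : Complex.Gamma (Complex.I * t) * Complex.Gamma (1 - Complex.I * t)
      = (Real.pi : ℂ) / Complex.sin (Real.pi * (Complex.I * t)) :=
    Complex.Gamma_mul_Gamma_one_sub _
  have hsin : Complex.sin ((Real.pi : ℂ) * (Complex.I * t)) = (Real.sinh (Real.pi * t) : ℂ) * Complex.I := by
    rw [show (Real.pi : ℂ) * (Complex.I * t) = ((Real.pi * t : ℝ) : ℂ) * Complex.I by push_cast; ring,
      Complex.sin_mul_I, Complex.ofReal_sinh]
  have hsh : Real.sinh (Real.pi * t) ≠ 0 := by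
    simp [Real.sinh_eq_zero, Real.pi_ne_zero, ht]
  have : (‖Complex.Gamma (1 + Complex.I * t)‖^2 : ℂ)
      = ((Real.pi * t / Real.sinh (Real.pi * t) : ℝ) : ℂ) := by
    rw [h2, h1, mul_assoc, h3, hsin]
    push_cast
    rw [mul_div_assoc', show Complex.I * (t:ℂ) * (Real.pi:ℂ) = ((Real.pi:ℂ) * t) * Complex.I by ring,
      mul_div_mul_right _ _ Complex.I_ne_zero]
  exact_mod_cast this

lemma abs_gamma_even (t : ℝ) :
    ‖Complex.Gamma (1 + Complex.I * (-t : ℝ))‖ = ‖Complex.Gamma (1 + Complex.I * t)‖ := by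
  have : (1 + Complex.I * ((-t : ℝ) : ℂ)) = (starRingEnd ℂ) (1 + Complex.I * t) := by
    simp [Complex.ext_iff]
  rw [this, Complex.Gamma_conj, Complex.norm_conj]

lemma integrableOn_Iic_of_even {h : ℝ → ℝ} (he : ∀ x, h (-x) = h x)
    (hi : IntegrableOn h (Ici (1:ℝ))) : IntegrableOn h (Iic (-1 : ℝ)) := by
  rw [← Measure.map_neg_eq_self (volume : Measure ℝ)]
  have m : MeasurableEmbedding fun x : ℝ => -x := (Homeomorph.neg ℝ).measurableEmbedding
  rw [m.integrableOn_map_iff]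
  simp_rw [Function.comp_def, he, neg_preimage, neg_Iic, neg_neg]
  exact hi

theorem gamma_ratio_integrable_and_rapid_decay (α : ℝ) (hα : α ∈ Set.Ioo (0:ℝ) 1) :
    Integrable (fun s : ℝ =>
        Complex.Gamma (1 + Complex.I * s) / Complex.Gamma (1 + Complex.I * (α * s))) ∧
      ∀ n : ℕ, Tendsto (fun s : ℝ =>
          |s| ^ n *
            ‖Complex.Gamma (1 + Complex.I * s)
              / Complex.Gamma (1 + Complex.I * (α * s))‖)
        (Filter.cocompact ℝ) (nhds 0) := by
  obtain ⟨hα0, hα1⟩ := hα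
  have hcast : ∀ s : ℝ, ((α : ℂ) * (s : ℂ)) = ((α * s : ℝ) : ℂ) := fun s => by push_cast; ring
  simp only [hcast]
  set f : ℝ → ℂ := fun s => Complex.Gamma (1 + Complex.I * (s:ℂ)) / Complex.Gamma (1 + Complex.I * ((α * s : ℝ):ℂ)) with hf
  set g : ℝ → ℝ := fun s => ‖f s‖ with hg
  have hre : ∀ t : ℝ, (0:ℝ) < (1 + Complex.I * (t:ℂ)).re := by
    intro t; simp
  have hne : ∀ t : ℝ, Complex.Gamma (1 + Complex.I * (t:ℂ)) ≠ 0 :=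
    fun t => Complex.Gamma_ne_zero_of_re_pos (hre t)
  have hGcont : ∀ (c : ℝ), Continuous fun s : ℝ => Complex.Gamma (1 + Complex.I * (c * s : ℝ)) := by
    intro c
    rw [continuous_iff_continuousAt]
    intro s
    have h1 : ContinuousAt Complex.Gamma (1 + Complex.I * ((c * s : ℝ) : ℂ)) := by
      refine (Complex.differentiableAt_Gamma _ fun m => ?_).continuousAt
      intro h
      have := congrArg Complex.re h
      simp at this
      have h2 : (0:ℝ) ≤ m := m.cast_nonneg
      linarith
    exact ContinuousAt.comp (f := fun s : ℝ => 1 + Complex.I * ((c * s : ℝ) : ℂ)) h1 (by fun_prop)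
  have hcont : Continuous f := by
    have h1 := hGcont 1
    simp only [one_mul] at h1
    exact h1.div (hGcont α) fun s => hne _
  have hgcont : Continuous g := continuous_norm.comp hcont
  -- even
  have geven : ∀ s : ℝ, g (-s) = g s := by
    intro s
    simp only [hg, hf, norm_div]
    rw [show (α * (-s) : ℝ) = -(α * s) by ring]
    rw [abs_gamma_even s, abs_gamma_even (α * s)]
  -- formula for g^2
  have hsq : ∀ s : ℝ, s ≠ 0 →
      g s ^ 2 = Real.sinh (Real.pi * (α * s)) / (α * Real.sinh (Real.pi * s)) := by
    intro s hs
    have hαs : α * s ≠ 0 := mul_ne_zero hα0.ne' hs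
    simp only [hg, hf, norm_div, div_pow]
    rw [abs_gamma_sq' s hs, abs_gamma_sq' (α * s) hαs]
    have h1 : Real.sinh (Real.pi * s) ≠ 0 := by
      simp [Real.sinh_eq_zero, Real.pi_ne_zero, hs]
    have h2 : Real.sinh (Real.pi * (α * s)) ≠ 0 := by
      simp [Real.sinh_eq_zero, Real.pi_ne_zero, hαs]
    field_simp
  -- constants
  set B : ℝ := Real.pi * (1 - α) / 2 with hB
  have hBpos : 0 < B := by
    have := Real.pi_pos
    apply div_pos (mul_pos this (by linarith)) two_pos
  have h1me : 0 < 1 - Real.exp (-(2 * Real.pi)) := by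
    have : Real.exp (-(2 * Real.pi)) < 1 := by
      rw [Real.exp_lt_one_iff]
      have := Real.pi_pos; linarith
    linarith
  set K : ℝ := α * (1 - Real.exp (-(2 * Real.pi))) with hK
  have hKpos : 0 < K := mul_pos hα0 h1me
  set C : ℝ := Real.sqrt (1 / K) with hC
  -- main bound for s ≥ 1
  have hbound : ∀ s : ℝ, 1 ≤ s → g s ≤ C * Real.exp (-B * s) := by
    intro s hs
    have hs0 : s ≠ 0 := by linarith
    have hspos : (0:ℝ) < s := by linarith
    have hπ := Real.pi_pos
    have hnum : Real.sinh (Real.pi * (α * s)) ≤ Real.exp (Real.pi * (α * s)) / 2 := by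
      rw [Real.sinh_eq]
      have := Real.exp_pos (-(Real.pi * (α * s)))
      linarith
    have hden : Real.exp (Real.pi * s) * (1 - Real.exp (-(2 * Real.pi))) / 2
        ≤ Real.sinh (Real.pi * s) := by
      rw [Real.sinh_eq]
      have h1 : Real.exp (-(Real.pi * s)) ≤ Real.exp (Real.pi * s) * Real.exp (-(2 * Real.pi)) := by
        rw [← Real.exp_add, Real.exp_le_exp]
        nlinarith
      nlinarith
    have hdenpos : 0 < Real.sinh (Real.pi * s) := by
      have := Real.exp_pos (Real.pi * s)
      nlinarith
    have hsq2 : g s ^ 2 ≤ (1 / K) * Real.exp (-(2 * B) * s) := by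
      rw [hsq s hs0]
      have hd2 : 0 < α * (Real.exp (Real.pi * s) * (1 - Real.exp (-(2 * Real.pi))) / 2) :=
        mul_pos hα0 (div_pos (mul_pos (Real.exp_pos _) h1me) two_pos)
      have step : Real.sinh (Real.pi * (α * s)) / (α * Real.sinh (Real.pi * s))
          ≤ (Real.exp (Real.pi * (α * s)) / 2) / (α * (Real.exp (Real.pi * s) * (1 - Real.exp (-(2 * Real.pi))) / 2)) := by
        apply div_le_div₀ (by positivity) hnum hd2
        apply mul_le_mul_of_nonneg_left hden hα0.le
      refine step.trans (le_of_eq ?_)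
      rw [show (-(2 * B) * s) = Real.pi * (α * s) - Real.pi * s by rw [hB]; ring,
        Real.exp_sub]
      have he1 : Real.exp (Real.pi * s) ≠ 0 := (Real.exp_pos _).ne'
      rw [hK]
      field_simp
    have hgnn : 0 ≤ g s := norm_nonneg _
    have : g s = Real.sqrt (g s ^ 2) := by
      rw [Real.sqrt_sq hgnn]
    rw [this]
    have h2 : Real.sqrt (g s ^ 2) ≤ Real.sqrt ((1 / K) * Real.exp (-(2 * B) * s)) :=
      Real.sqrt_le_sqrt hsq2
    refine h2.trans (le_of_eq ?_)
    rw [Real.sqrt_mul (by positivity), ← hC]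
    congr 1
    rw [show (-(2 * B) * s) = (-B * s) + (-B * s) by ring, Real.exp_add,
      Real.sqrt_mul_self (Real.exp_pos _).le]
  -- integrability
  have hIoi : IntegrableOn g (Ioi 1) := by
    apply integrable_of_isBigO_exp_neg hBpos hgcont.continuousOn
    apply Asymptotics.IsBigO.of_bound C
    filter_upwards [eventually_ge_atTop (1:ℝ)] with x hx
    rw [Real.norm_eq_abs, Real.norm_eq_abs, _root_.abs_of_nonneg (norm_nonneg _),
      _root_.abs_of_nonneg (Real.exp_pos _).le]
    exact hbound x hx
  have hIci : IntegrableOn g (Ici 1) := (integrableOn_Ici_iff_integrableOn_Ioi (by simp)).2 hIoi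
  have hIic : IntegrableOn g (Iic (-1)) := integrableOn_Iic_of_even geven hIci
  have hIcc : IntegrableOn g (Icc (-1) 1) := hgcont.integrableOn_Icc
  have hgint : Integrable g := by
    have hu : Iic (-1 : ℝ) ∪ (Icc (-1 : ℝ) 1 ∪ Ioi 1) = univ := by
      rw [← Iic_union_Ioi (a := (1:ℝ)), ← Iic_union_Icc_eq_Iic (by norm_num : (-1:ℝ) ≤ 1)]
      rw [union_assoc]
    have := (hIic.union (hIcc.union hIoi))
    rwa [hu, integrableOn_univ] at this
  have hfint : Integrable f := by
    rw [← integrable_norm_iff hcont.aestronglyMeasurable]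
    exact hgint
  refine ⟨hfint, ?_⟩
  -- rapid decay
  intro n
  have hatTop : Tendsto (fun s : ℝ => |s| ^ n * g s) atTop (nhds 0) := by
    have hlim : Tendsto (fun x : ℝ => C * (x ^ (n:ℝ) * Real.exp (-B * x))) atTop (nhds (C * 0)) := by
      apply Tendsto.const_mul
      have := tendsto_rpow_mul_exp_neg_mul_atTop_nhds_zero (n:ℝ) B hBpos
      simpa [neg_mul] using this
    rw [mul_zero] at hlim
    apply squeeze_zero' (Eventually.of_forall fun s => by positivity) _ hlim
    filter_upwards [eventually_ge_atTop (1:ℝ)] with s hs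
    have h1 : |s| = s := abs_of_nonneg (by linarith)
    have h2 : s ^ (n:ℝ) = s ^ n := Real.rpow_natCast s n
    rw [h1, h2]
    calc s ^ n * g s ≤ s ^ n * (C * Real.exp (-B * s)) := by
          apply mul_le_mul_of_nonneg_left (hbound s hs) (by positivity)
      _ = C * (s ^ n * Real.exp (-B * s)) := by ring
  have hatBot : Tendsto (fun s : ℝ => |s| ^ n * g s) atBot (nhds 0) := by
    have := hatTop.comp tendsto_neg_atBot_atTop
    convert this using 1
    funext s
    simp only [Function.comp_apply, abs_neg, geven]
  rw [cocompact_eq_atBot_atTop, tendsto_sup]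
  exact ⟨hatBot, hatTop⟩
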